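/- The stay-or-roll protocol is not self-stabilizing on all 2×2×2 games: there is a three-player game over {1,2}³, with a unique pure Nash equilibrium p = (1,1,1), in which for every state a with a_3 = 2, action 2 is a best response of player 3 at a; consequently, under stay-or-roll dynamics, from any initial state with a_3 = 2, player 3 never changes its action and the unique PNE (1,1,1) is never reached. -/

import Mathlib

open scoped Classical

variable {n : ℕ} {A : Fin n → Type*}

/-- `α` is a best response of node `i` at state `a` with respect to `i`'s own
utility function `ui`. -/
def IsBR1 (ui : (∀ j, A j) → ℝ) (i : Fin n) (α : A i) (a : ∀ j, A j) : Prop :=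
  ∀ β : A i, ui (Function.update a i β) ≤ ui (Function.update a i α)

/-- A pure Nash equilibrium: every node is best-responding. -/
def PNE (u : ∀ i : Fin n, (∀ j, A j) → ℝ) (a : ∀ j, A j) : Prop :=
  ∀ i : Fin n, IsBR1 (u i) i (a i) a

/-- `α` is a weakly dominant action of node `i`: it is a best response at every
state. -/
def WDom (ui : (∀ j, A j) → ℝ) (i : Fin n) (α : A i) : Prop :=
  ∀ a : ∀ j, A j, IsBR1 ui i α a

/-- Transition probability of the synchronous dynamics: all nodes simultaneously and
independently sample new actions from their randomized reaction functions. -/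
def kernel (f : ∀ i : Fin n, (∀ j, A j) → A i → ℝ) (a b : ∀ j, A j) : ℝ :=
  ∏ i : Fin n, f i a (b i)

/-- Distribution of the state at time `t`, starting from `a0`. -/
noncomputable def evolve [∀ i, Fintype (A i)] [∀ i, DecidableEq (A i)]
    (f : ∀ i : Fin n, (∀ j, A j) → A i → ℝ) (a0 : ∀ j, A j) :
    ℕ → (∀ j, A j) → ℝ
  | 0 => fun b => if b = a0 then 1 else 0
  | t + 1 => fun b => ∑ a : ∀ j, A j, evolve f a0 t a * kernel f a b

/-- A historyless randomized uncoupled protocol assigns to each node's utility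
function (independently of the others' utilities) a randomized reaction function;
validity says each value is a probability distribution over the node's actions. -/
def ValidProto [∀ i, Fintype (A i)]
    (P : ∀ i : Fin n, ((∀ j, A j) → ℝ) → (∀ j, A j) → A i → ℝ) : Prop :=
  ∀ (i : Fin n) (ui : (∀ j, A j) → ℝ) (a : ∀ j, A j),
    (∀ α : A i, 0 ≤ P i ui a α) ∧ ∑ α : A i, P i ui a α = 1

/-- The protocol is self-stabilizing on all games over `A`: for every game with at
least one pure Nash equilibrium, from every initial state the probability of being
at a PNE at time `t` tends to `1`. -/
def SelfStab [∀ i, Fintype (A i)] [∀ i, DecidableEq (A i)]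
    (P : ∀ i : Fin n, ((∀ j, A j) → ℝ) → (∀ j, A j) → A i → ℝ) : Prop :=
  ∀ u : ∀ i : Fin n, (∀ j, A j) → ℝ, (∃ p, PNE u p) →
    ∀ a0 : ∀ j, A j,
      Filter.Tendsto
        (fun t => ∑ b ∈ Finset.univ.filter (fun b => PNE u b),
          evolve (fun i => P i (u i)) a0 t b)
        Filter.atTop (nhds 1)


/-- The stay-or-roll protocol: a node keeps its action if it is best-responding at
the current state, and otherwise picks an action uniformly at random. -/
noncomputable def SOR [∀ i, Fintype (A i)] [∀ i, DecidableEq (A i)]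
    (i : Fin n) (ui : (∀ j, A j) → ℝ) (a : ∀ j, A j) (α : A i) : ℝ :=
  if IsBR1 ui i (a i) a then (if α = a i then 1 else 0)
  else 1 / (Fintype.card (A i))

-- auxiliary defs for stmt17 (to be spliced above the theorem)
noncomputable def myU : Fin 3 → (Fin 3 → Fin 2) → ℝ := fun i a =>
  if a 0 = 0 then
    if a 1 = 0 then (if a 2 = 0 then ![1,1,1] i else ![1,0,1] i)
    else (if a 2 = 0 then ![1,0,0] i else ![0,1,1] i)
  else
    if a 1 = 0 then (if a 2 = 0 then ![0,1,0] i else ![0,1,1] i)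
    else (if a 2 = 0 then ![0,0,0] i else ![1,0,1] i)

lemma fin2cases (x : Fin 2) : x = 0 ∨ x = 1 := by omega

lemma myBR3 : ∀ a : Fin 3 → Fin 2, a 2 = 1 → IsBR1 (myU 2) 2 (1 : Fin 2) a := by
  intro a ha β
  rcases fin2cases (a 0) with h0 | h0 <;> rcases fin2cases (a 1) with h1 | h1 <;>
    rcases fin2cases β with hb | hb <;>
  simp [myU, Function.update, h0, h1, ha, hb]

lemma myPNE : PNE myU (fun _ => 0) := by
  intro i β
  fin_cases i <;> rcases fin2cases β with hb | hb <;>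
    simp [myU, Function.update, hb]

lemma myUniq : ∀ q : Fin 3 → Fin 2, PNE myU q → q = fun _ => 0 := by
  intro q hq
  rcases fin2cases (q 0) with h0 | h0 <;> rcases fin2cases (q 1) with h1 | h1 <;>
    rcases fin2cases (q 2) with h2 | h2
  · funext j; fin_cases j <;> assumption
  · have := hq 1 1; norm_num [IsBR1, myU, Function.update, h0, h1, h2, Fin.ext_iff] at this
  · have := hq 2 1; norm_num [IsBR1, myU, Function.update, h0, h1, h2, Fin.ext_iff, Matrix.cons_val_two] at this
  · have := hq 0 1; norm_num [IsBR1, myU, Function.update, h0, h1, h2, Fin.ext_iff] at this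
  · have := hq 2 1; norm_num [IsBR1, myU, Function.update, h0, h1, h2, Fin.ext_iff, Matrix.cons_val_two] at this
  · have := hq 0 0; norm_num [IsBR1, myU, Function.update, h0, h1, h2, Fin.ext_iff] at this
  · have := hq 2 1; norm_num [IsBR1, myU, Function.update, h0, h1, h2, Fin.ext_iff, Matrix.cons_val_two] at this
  · have := hq 1 0; norm_num [IsBR1, myU, Function.update, h0, h1, h2, Fin.ext_iff] at this

lemma SOR_nonneg {n : ℕ} {A : Fin n → Type*} [∀ i, Fintype (A i)] [∀ i, DecidableEq (A i)]
    (i : Fin n) (ui : (∀ j, A j) → ℝ) (a : ∀ j, A j) (α : A i) :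
    0 ≤ SOR i ui a α := by
  unfold SOR
  split <;> [skip; positivity]
  split <;> norm_num

lemma evolve_nonneg {n : ℕ} {A : Fin n → Type*} [∀ i, Fintype (A i)] [∀ i, DecidableEq (A i)]
    (u : ∀ i : Fin n, (∀ j, A j) → ℝ) (a0 : ∀ j, A j) (t : ℕ) (b : ∀ j, A j) :
    0 ≤ evolve (fun i => SOR i (u i)) a0 t b := by
  induction t generalizing b with
  | zero => unfold evolve; split <;> norm_num
  | succ t ih =>
    unfold evolve
    refine Finset.sum_nonneg fun a _ => mul_nonneg (ih a) ?_
    exact Finset.prod_nonneg fun i _ => SOR_nonneg i (u i) a (b i)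

lemma mySupport (a0 : Fin 3 → Fin 2) (ha0 : a0 2 = 1) :
    ∀ (t : ℕ) (b : Fin 3 → Fin 2),
      0 < evolve (fun i => SOR i (myU i)) a0 t b → b 2 = 1 := by
  intro t
  induction t with
  | zero =>
    intro b hb
    unfold evolve at hb
    by_cases h : b = a0
    · rw [h]; exact ha0
    · simp [h] at hb
  | succ t ih =>
    intro b hb
    unfold evolve at hb
    have hb' : ∑ _a : Fin 3 → Fin 2, (0 : ℝ) <
        ∑ a : Fin 3 → Fin 2, evolve (fun i => SOR i (myU i)) a0 t a *
          kernel (fun i => SOR i (myU i)) a b := by simpa using hb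
    obtain ⟨a, -, ha'⟩ := Finset.exists_lt_of_sum_lt hb'
    rcases mul_pos_iff.mp ha' with ⟨h1, h2⟩ | ⟨h1, h2⟩
    · have ha2 : a 2 = 1 := ih a h1
      have hf : SOR 2 (myU 2) a (b 2) ≠ 0 := by
        intro h0
        have hz : kernel (fun i => SOR i (myU i)) a b = 0 :=
          Finset.prod_eq_zero (Finset.mem_univ 2) h0
        rw [hz] at h2; exact lt_irrefl 0 h2
      have hBR : IsBR1 (myU 2) 2 (a 2) a := by rw [ha2]; exact myBR3 a ha2
      unfold SOR at hf
      rw [if_pos hBR] at hf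
      by_cases hb2 : b 2 = a 2
      · rw [hb2, ha2]
      · simp [hb2] at hf
    · exact absurd h1 (not_lt.mpr (evolve_nonneg _ _ _ _))

lemma myZero (a0 : Fin 3 → Fin 2) (ha0 : a0 2 = 1) (t : ℕ) :
    evolve (fun i => SOR i (myU i)) a0 t (fun _ => 0) = 0 := by
  by_contra h
  have hpos : 0 < evolve (fun i => SOR i (myU i)) a0 t (fun _ => 0) :=
    lt_of_le_of_ne (evolve_nonneg _ _ _ _) (Ne.symm h)
  have := mySupport a0 ha0 t _ hpos
  simp at this

/-- The stay-or-roll protocol is not self-stabilizing on all `2×2×2` games: there is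
a three-player game over `{1,2}³` (actions encoded in `Fin 2`, with `1 ↦ 0` and
`2 ↦ 1`) with a unique pure Nash equilibrium `p = (1,1,1)` (i.e. `fun _ => 0`), in
which for every state `a` with `a_3 = 2` (i.e. `a 2 = 1`) the action `2` is a best
response of player 3 at `a`; consequently, under stay-or-roll dynamics, from any
initial state with `a_3 = 2`, player 3 never changes its action (the state
distribution is supported on states with third coordinate `2`) and the unique PNE is
never reached (it has probability `0` at every time). -/
theorem stmt17 :
    ∃ u : ∀ _ : Fin 3, (Fin 3 → Fin 2) → ℝ,
      PNE u (fun _ => 0) ∧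
      (∀ q : Fin 3 → Fin 2, PNE u q → q = fun _ => 0) ∧
      (∀ a : Fin 3 → Fin 2, a 2 = 1 → IsBR1 (u 2) 2 (1 : Fin 2) a) ∧
      (∀ a0 : Fin 3 → Fin 2, a0 2 = 1 →
        (∀ (t : ℕ) (b : Fin 3 → Fin 2),
          0 < evolve (fun i => SOR i (u i)) a0 t b → b 2 = 1) ∧
        (∀ t : ℕ, evolve (fun i => SOR i (u i)) a0 t (fun _ => 0) = 0)) := by
  exact ⟨myU, myPNE, myUniq, myBR3,
    fun a0 ha0 => ⟨mySupport a0 ha0, myZero a0 ha0⟩⟩
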